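/- In A(Γ₁), the intersection of the subgroup generated by {a, b, c, d, ef, h} with the subgroup generated by {a, b, c, e} equals the subgroup generated by {a, b, c}. -/

import Mathlib

open scoped commutatorElement

/-- The defining relators of the right-angled Artin group on a simple graph `G`:
the commutators of the generators corresponding to adjacent vertices. -/
def raagRels {V : Type*} (G : SimpleGraph V) : Set (FreeGroup V) :=
  {r | ∃ u v : V, G.Adj u v ∧ r = ⁅FreeGroup.of u, FreeGroup.of v⁆}

/-- The right-angled Artin group on a simple graph `G`. -/
abbrev RAAG {V : Type*} (G : SimpleGraph V) : Type _ := PresentedGroup (raagRels G)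

/-- The generator of the right-angled Artin group corresponding to a vertex. -/
def gen {V : Type*} (G : SimpleGraph V) (v : V) : RAAG G := PresentedGroup.of v

/-- Vertices of the graph Γ₁. -/
inductive V1 : Type | a | b | c | d | e | f | g | h
deriving DecidableEq

/-- The graph Γ₁ with edges ab, bc, cd, da, ea, eb, ec, ed, fa, fb, fc, fd, ef,
ga, gb, gc, ge, ha, hb, hd, hf. -/
def G1 : SimpleGraph V1 := SimpleGraph.fromRel (fun u v => (u, v) ∈
  ([(.a,.b),(.b,.c),(.c,.d),(.d,.a),
    (.e,.a),(.e,.b),(.e,.c),(.e,.d),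
    (.f,.a),(.f,.b),(.f,.c),(.f,.d),(.e,.f),
    (.g,.a),(.g,.b),(.g,.c),(.g,.e),
    (.h,.a),(.h,.b),(.h,.d),(.h,.f)] : List (V1 × V1)))

lemma gen_comm {u v : V1} (h : G1.Adj u v) : Commute (gen G1 u) (gen G1 v) := by
  rw [← commutatorElement_eq_one_iff_commute]
  have h1 : (⁅gen G1 u, gen G1 v⁆ : RAAG G1)
      = PresentedGroup.mk (raagRels G1) ⁅FreeGroup.of u, FreeGroup.of v⁆ :=
    (map_commutatorElement _ _ _).symm
  rw [h1]
  exact (QuotientGroup.eq_one_iff _).mpr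
    (Subgroup.subset_normalClosure ⟨u, v, h, rfl⟩)

def vchar : V1 → Multiplicative ℤ
  | .e => Multiplicative.ofAdd 1
  | .f => Multiplicative.ofAdd (-1)
  | _ => 1

def χ : RAAG G1 →* Multiplicative ℤ :=
  PresentedGroup.toGroup (f := vchar) (by
    rintro r ⟨u, v, _, rfl⟩
    rw [map_commutatorElement]
    exact commutatorElement_eq_one_iff_commute.mpr (mul_comm _ _))

lemma χ_gen (v : V1) : χ (gen G1 v) = vchar v := PresentedGroup.toGroup.of _

/-- In `A(Γ₁)`, the intersection of the subgroup generated by `{a, b, c, d, ef, h}` with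
the subgroup generated by `{a, b, c, e}` equals the subgroup generated by `{a, b, c}`. -/
theorem subgroup_intersection :
    Subgroup.closure
        ({gen G1 V1.a, gen G1 V1.b, gen G1 V1.c, gen G1 V1.d,
          gen G1 V1.e * gen G1 V1.f, gen G1 V1.h} : Set (RAAG G1)) ⊓
      Subgroup.closure
        ({gen G1 V1.a, gen G1 V1.b, gen G1 V1.c, gen G1 V1.e} : Set (RAAG G1)) =
    Subgroup.closure ({gen G1 V1.a, gen G1 V1.b, gen G1 V1.c} : Set (RAAG G1)) := by
  set N : Subgroup (RAAG G1) :=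
    Subgroup.closure ({gen G1 V1.a, gen G1 V1.b, gen G1 V1.c} : Set (RAAG G1)) with hN
  apply le_antisymm
  · rintro x ⟨hx2, hx1⟩
    -- x is killed by χ, since all generators of the first subgroup are
    have hχx : χ x = 1 := by
      refine Subgroup.closure_induction (fun w hw => ?_) (by simp)
        (fun _ _ _ _ h1 h2 => by rw [map_mul, h1, h2, mul_one])
        (fun _ _ h1 => by rw [map_inv, h1, inv_one]) hx2
      simp only [Set.mem_insert_iff, Set.mem_singleton_iff] at hw
      rcases hw with rfl | rfl | rfl | rfl | rfl | rfl <;>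
        simp [χ_gen, vchar]
    clear hx2
    -- e commutes with everything in N
    have hec : ∀ y ∈ N, Commute (gen G1 V1.e) y := by
      intro y hy
      induction hy using Subgroup.closure_induction with
      | mem z hz =>
        simp only [Set.mem_insert_iff, Set.mem_singleton_iff] at hz
        rcases hz with rfl | rfl | rfl <;>
          exact gen_comm (by rw [G1, SimpleGraph.fromRel_adj]; decide)
      | one => exact Commute.one_right _
      | mul z w _ _ hz hw => exact hz.mul_right hw
      | inv z _ hz => exact hz.inv_right
    -- every element of ⟨a,b,c,e⟩ is y * e^n with y ∈ N
    have key : ∃ y ∈ N, ∃ n : ℤ, x = y * (gen G1 V1.e) ^ n := by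
      clear hχx
      induction hx1 using Subgroup.closure_induction with
      | mem z hz =>
        simp only [Set.mem_insert_iff, Set.mem_singleton_iff] at hz
        rcases hz with rfl | rfl | rfl | rfl
        · exact ⟨gen G1 V1.a, Subgroup.subset_closure (by simp), 0, by simp⟩
        · exact ⟨gen G1 V1.b, Subgroup.subset_closure (by simp), 0, by simp⟩
        · exact ⟨gen G1 V1.c, Subgroup.subset_closure (by simp), 0, by simp⟩
        · exact ⟨1, one_mem _, 1, by simp⟩
      | one => exact ⟨1, one_mem _, 0, by simp⟩
      | mul z w _ _ hz hw =>
        obtain ⟨y1, hy1, n1, rfl⟩ := hz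
        obtain ⟨y2, hy2, n2, rfl⟩ := hw
        refine ⟨y1 * y2, mul_mem hy1 hy2, n1 + n2, ?_⟩
        have hc : Commute ((gen G1 V1.e) ^ n1) y2 := ((hec y2 hy2).zpow_left n1)
        rw [zpow_add, mul_assoc, ← mul_assoc ((gen G1 V1.e) ^ n1), hc.eq]
        group
      | inv z _ hz =>
        obtain ⟨y, hy, n, rfl⟩ := hz
        refine ⟨y⁻¹, inv_mem hy, -n, ?_⟩
        have hc : Commute ((gen G1 V1.e) ^ n)⁻¹ y⁻¹ :=
          ((hec y hy).zpow_left n).inv_inv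
        rw [mul_inv_rev, hc.eq, zpow_neg]
    obtain ⟨y, hy, n, rfl⟩ := key
    -- N is in the kernel of χ
    have hNy : χ y = 1 := by
      refine Subgroup.closure_induction (fun w hw => ?_) (by simp)
        (fun _ _ _ _ h1 h2 => by rw [map_mul, h1, h2, mul_one])
        (fun _ _ h1 => by rw [map_inv, h1, inv_one]) hy
      simp only [Set.mem_insert_iff, Set.mem_singleton_iff] at hw
      rcases hw with rfl | rfl | rfl <;> rw [χ_gen] <;> rfl
    rw [map_mul, hNy, one_mul, map_zpow, χ_gen] at hχx
    have hn : n = 0 := by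
      have := congrArg Multiplicative.toAdd hχx
      simpa [vchar] using this
    rw [hn]
    simpa using hy
  · rw [le_inf_iff]
    constructor <;>
    · refine (Subgroup.closure_le _).mpr fun z hz => ?_
      simp only [Set.mem_insert_iff, Set.mem_singleton_iff] at hz
      rcases hz with rfl | rfl | rfl <;> exact Subgroup.subset_closure (by simp)
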